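/- Fix an integer n ≥ 2 and let q = exp(πi/n) ∈ ℂ. Let (a,b,c) be an admissible triple of natural numbers with a, b, c ≤ n−2. Then the Kauffman–Lins theta value θ(a,b,c) (whose denominator [a]![b]![c]! is nonzero since a,b,c ≤ n−2 < n) is zero if and only if a+b+c ≥ 2n−2. -/

import Mathlib

lemma exp_eq_aux (n : ℕ) (hn : 2 ≤ n) (u v : ℂ) :
    Complex.exp (u * (Real.pi * Complex.I / n)) = Complex.exp (v * (Real.pi * Complex.I / n))
      ↔ ∃ k : ℤ, u = v + 2 * k * n := by
  have hne : (n : ℂ) ≠ 0 := Nat.cast_ne_zero.mpr (by omega)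
  have hπ : (Real.pi : ℂ) ≠ 0 := Complex.ofReal_ne_zero.mpr Real.pi_ne_zero
  have hI := Complex.I_ne_zero
  rw [Complex.exp_eq_exp_iff_exists_int]
  constructor
  · rintro ⟨k, hk⟩
    refine ⟨k, ?_⟩
    field_simp at hk
    have h2 : u * (Real.pi * Complex.I) = (v + 2 * k * n) * (Real.pi * Complex.I) := by
      linear_combination (↑Real.pi * Complex.I) * hk
    exact mul_right_cancel₀ (mul_ne_zero hπ hI) h2
  · rintro ⟨k, hk⟩
    refine ⟨k, ?_⟩
    subst hk
    field_simp

/-- The root of unity `q = exp(πi/n)`. -/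
noncomputable def qRoot (n : ℕ) : ℂ := Complex.exp (Real.pi * Complex.I / n)

/-- The `m`-th quantum integer `[m] = (q^m − q^{−m})/(q − q^{−1})` at `q = exp(πi/n)`. -/
noncomputable def qInt (n : ℕ) (m : ℤ) : ℂ :=
  (qRoot n ^ m - qRoot n ^ (-m)) / (qRoot n - (qRoot n)⁻¹)

/-- The quantum factorial `[s]! = ∏_{j=1}^{s} [j]` at `q = exp(πi/n)`. -/
noncomputable def qFact (n s : ℕ) : ℂ := ∏ j ∈ Finset.Icc 1 s, qInt n j

lemma qRoot_zpow (n : ℕ) (m : ℤ) :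
    qRoot n ^ m = Complex.exp ((m : ℂ) * (Real.pi * Complex.I / n)) :=
  (Complex.exp_int_mul _ m).symm

lemma qsub_ne_zero (n : ℕ) (hn : 2 ≤ n) : qRoot n - (qRoot n)⁻¹ ≠ 0 := by
  have h1 : qRoot n = Complex.exp ((1 : ℂ) * (Real.pi * Complex.I / n)) := by
    rw [qRoot, one_mul]
  have h2 : (qRoot n)⁻¹ = Complex.exp ((-1 : ℂ) * (Real.pi * Complex.I / n)) := by
    rw [qRoot, ← Complex.exp_neg]; ring_nf
  rw [h2, h1, sub_ne_zero]
  intro h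
  rw [exp_eq_aux n hn] at h
  obtain ⟨k, hk⟩ := h
  have hk' : (1 : ℤ) = -1 + 2 * k * n := by exact_mod_cast hk
  have : 2 ≤ (n : ℤ) := by exact_mod_cast hn
  have hd : (n : ℤ) ∣ 1 := ⟨k, by linarith⟩
  have := Int.le_of_dvd one_pos hd
  omega

lemma qInt_eq_zero_iff (n : ℕ) (hn : 2 ≤ n) (m : ℤ) :
    qInt n m = 0 ↔ (n : ℤ) ∣ m := by
  rw [qInt, div_eq_zero_iff, or_iff_left (qsub_ne_zero n hn), sub_eq_zero,
    qRoot_zpow, qRoot_zpow, exp_eq_aux n hn]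
  push_cast
  constructor
  · rintro ⟨k, hk⟩
    have hk' : m = -m + 2 * k * n := by exact_mod_cast hk
    exact ⟨k, by linarith⟩
  · rintro ⟨k, rfl⟩
    exact ⟨k, by push_cast; ring⟩

lemma qFact_eq_zero_iff (n : ℕ) (hn : 2 ≤ n) (s : ℕ) :
    qFact n s = 0 ↔ n ≤ s := by
  rw [qFact, Finset.prod_eq_zero_iff]
  constructor
  · rintro ⟨j, hj, hz⟩
    rw [qInt_eq_zero_iff n hn] at hz
    rw [Finset.mem_Icc] at hj
    have : n ∣ j := by exact_mod_cast hz
    have := Nat.le_of_dvd (by omega) this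
    omega
  · intro h
    refine ⟨n, Finset.mem_Icc.mpr ⟨by omega, h⟩, ?_⟩
    rw [qInt_eq_zero_iff n hn]

lemma qFact_ne_zero (n : ℕ) (hn : 2 ≤ n) (s : ℕ) (hs : s < n) : qFact n s ≠ 0 := by
  rw [Ne, qFact_eq_zero_iff n hn]; omega

/-- A triple `(a,b,c)` of natural numbers is admissible if `a+b+c` is even and
`a+b ≥ c`, `b+c ≥ a`, `a+c ≥ b`. -/
def Admissible (a b c : ℕ) : Prop :=
  Even (a + b + c) ∧ c ≤ a + b ∧ a ≤ b + c ∧ b ≤ a + c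

/-- The Kauffman–Lins theta value `θ(a,b,c)` at `q = exp(πi/n)`:
`θ(a,b,c) = [x]![y]![z]![x+y+z+1]! / ([x+y]![y+z]![x+z]!)` with
`x = (a+b−c)/2`, `y = (b+c−a)/2`, `z = (a+c−b)/2`. -/
noncomputable def thetaNet (n a b c : ℕ) : ℂ :=
  qFact n ((a + b - c) / 2) * qFact n ((b + c - a) / 2) * qFact n ((a + c - b) / 2) *
      qFact n ((a + b - c) / 2 + (b + c - a) / 2 + (a + c - b) / 2 + 1) /
    (qFact n ((a + b - c) / 2 + (b + c - a) / 2) *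
      qFact n ((b + c - a) / 2 + (a + c - b) / 2) *
      qFact n ((a + b - c) / 2 + (a + c - b) / 2))

/-- At `q = exp(πi/n)` with `n ≥ 2`, for an admissible triple `(a,b,c)` with
`a,b,c ≤ n−2`, the theta value `θ(a,b,c)` is zero iff `a+b+c ≥ 2n−2`. -/
theorem thetaNet_eq_zero_iff (n : ℕ) (hn : 2 ≤ n) (a b c : ℕ)
    (hadm : Admissible a b c) (ha : a ≤ n - 2) (hb : b ≤ n - 2) (hc : c ≤ n - 2) :
    thetaNet n a b c = 0 ↔ 2 * n - 2 ≤ a + b + c := by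
  obtain ⟨⟨k, hk⟩, h1, h2, h3⟩ := hadm
  rw [thetaNet]
  set x := (a + b - c) / 2 with hx
  set y := (b + c - a) / 2 with hy
  set z := (a + c - b) / 2 with hz
  have hxy : x + y = b := by omega
  have hyz : y + z = c := by omega
  have hxz : x + z = a := by omega
  have hD : qFact n (x + y) * qFact n (y + z) * qFact n (x + z) ≠ 0 := by
    refine mul_ne_zero (mul_ne_zero ?_ ?_) ?_ <;>
      apply qFact_ne_zero n hn <;> omega
  rw [div_eq_zero_iff, or_iff_left hD, mul_eq_zero, mul_eq_zero, mul_eq_zero]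
  have hX : qFact n x ≠ 0 := qFact_ne_zero n hn x (by omega)
  have hY : qFact n y ≠ 0 := qFact_ne_zero n hn y (by omega)
  have hZ : qFact n z ≠ 0 := qFact_ne_zero n hn z (by omega)
  simp only [hX, hY, hZ, false_or, or_false]
  rw [qFact_eq_zero_iff n hn]
  omega
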